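/- If a randomized 1-selection mechanism with predictions is impartial, α-consistent, and β-robust, then β ≤ 1/2 and α + β ≤ 1. -/
import Mathlib


/-- `E` has no self-loops. -/
def NoLoops {n : ℕ} (E : Finset (Fin n × Fin n)) : Prop := ∀ i, (i, i) ∉ E

/-- The indegree of vertex `i` in the graph with edge set `E`. -/
def indeg {n : ℕ} (E : Finset (Fin n × Fin n)) (i : Fin n) : ℕ :=
  (E.filter (fun e => e.2 = i)).card

/-- `Δ(G)`: the maximum indegree of a vertex. -/
def maxIndeg {n : ℕ} (E : Finset (Fin n × Fin n)) : ℕ :=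
  Finset.univ.sup (indeg E)

/-- A plurality graph: every vertex has outdegree exactly one. -/
def Plurality {n : ℕ} (E : Finset (Fin n × Fin n)) : Prop :=
  ∀ i, (E.filter (fun e => e.1 = i)).card = 1

/-- A (randomized) 1-selection mechanism with predictions: for each `n`, given a predicted
vertex and a graph, it assigns a selection probability to each vertex. -/
abbrev Mech1 : Type :=
  ∀ n : ℕ, Fin n → Finset (Fin n × Fin n) → Fin n → ℝ

/-- The probabilities lie in `[0,1]` and sum to at most 1 on every valid input. -/
def ValidMech1 (f : Mech1) : Prop :=
  ∀ (n : ℕ) (ih : Fin n) (E : Finset (Fin n × Fin n)), NoLoops E →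
    (∀ i, 0 ≤ f n ih E i ∧ f n ih E i ≤ 1) ∧ (∑ i, f n ih E i) ≤ 1

/-- Impartiality: the probability of selecting `i` does not depend on `i`'s outgoing edges. -/
def Impartial1 (f : Mech1) : Prop :=
  ∀ (n : ℕ) (ih : Fin n) (E E' : Finset (Fin n × Fin n)) (i : Fin n),
    NoLoops E → NoLoops E' →
    E.filter (fun e => e.1 ≠ i) = E'.filter (fun e => e.1 ≠ i) →
    f n ih E i = f n ih E' i

/-- `α`-consistency: an `α`-approximation whenever the prediction is accurate. -/
def Consistent1 (α : ℝ) (f : Mech1) : Prop :=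
  ∀ (n : ℕ) (ih : Fin n) (E : Finset (Fin n × Fin n)),
    NoLoops E → indeg E ih = maxIndeg E →
    α * (maxIndeg E : ℝ) ≤ ∑ i, f n ih E i * (indeg E i : ℝ)

/-- `β`-robustness: a `β`-approximation regardless of the prediction. -/
def Robust1 (β : ℝ) (f : Mech1) : Prop :=
  ∀ (n : ℕ) (ih : Fin n) (E : Finset (Fin n × Fin n)), NoLoops E →
    β * (maxIndeg E : ℝ) ≤ ∑ i, f n ih E i * (indeg E i : ℝ)

/-- If a randomized 1-selection mechanism with predictions is impartial, `α`-consistent, and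
`β`-robust, then `β ≤ 1/2` and `α + β ≤ 1`. -/
theorem upper_bound_one_selection (α β : ℝ) (hα₀ : 0 ≤ α) (hα₁ : α ≤ 1)
    (hβ₀ : 0 ≤ β) (hβ₁ : β ≤ 1) (f : Mech1)
    (hvalid : ValidMech1 f) (himp : Impartial1 f)
    (hcons : Consistent1 α f) (hrob : Robust1 β f) :
    β ≤ 1 / 2 ∧ α + β ≤ 1 := by

  set E1 : Finset (Fin 2 × Fin 2) := {((1:Fin 2), (0:Fin 2))} with hE1
  set E2 : Finset (Fin 2 × Fin 2) := {((0:Fin 2), (1:Fin 2))} with hE2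
  set E0 : Finset (Fin 2 × Fin 2) := {((0:Fin 2),(1:Fin 2)), ((1:Fin 2),(0:Fin 2))} with hE0
  have hn1 : NoLoops E1 := by unfold NoLoops; decide
  have hn2 : NoLoops E2 := by unfold NoLoops; decide
  have hn0 : NoLoops E0 := by unfold NoLoops; decide
  have hm1 : maxIndeg E1 = 1 := by decide
  have hm2 : maxIndeg E2 = 1 := by decide
  have hd1_0 : indeg E1 (0 : Fin 2) = 1 := by decide
  have hd1_1 : indeg E1 (1 : Fin 2) = 0 := by decide
  have hd2_0 : indeg E2 (0 : Fin 2) = 0 := by decide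
  have hd2_1 : indeg E2 (1 : Fin 2) = 1 := by decide
  -- robustness on E1 and E2 with prediction 0
  have hr1 : β ≤ f 2 0 E1 0 := by
    have := hrob 2 0 E1 hn1
    rw [Fin.sum_univ_two, hm1, hd1_0, hd1_1] at this
    simpa using this
  have hr2 : β ≤ f 2 0 E2 1 := by
    have := hrob 2 0 E2 hn2
    rw [Fin.sum_univ_two, hm2, hd2_0, hd2_1] at this
    simpa using this
  -- consistency on E1 with prediction 0
  have hc1 : α ≤ f 2 0 E1 0 := by
    have := hcons 2 0 E1 hn1 (by decide)
    rw [Fin.sum_univ_two, hm1, hd1_0, hd1_1] at this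
    simpa using this
  -- impartiality transfers to E0
  have hi1 : f 2 0 E0 0 = f 2 0 E1 0 := himp 2 0 E0 E1 0 hn0 hn1 (by decide)
  have hi2 : f 2 0 E0 1 = f 2 0 E2 1 := himp 2 0 E0 E2 1 hn0 hn2 (by decide)
  have hsum : f 2 0 E0 0 + f 2 0 E0 1 ≤ 1 := by
    have := (hvalid 2 0 E0 hn0).2
    rwa [Fin.sum_univ_two] at this
  rw [hi1, hi2] at hsum
  constructor
  · linarith
  · linarith
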